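/- Every vertex of a strongly connected tournament on n ≥ 3 vertices is contained in directed cycles of every length from 3 to n (Moon's theorem). -/

import Mathlib

section MoonAux

variable {V : Type*} {r : V → V → Prop}

/-- Cut lemma: a path from inside X to outside X crosses an edge. -/
lemma moon_cut {X : V → Prop} : ∀ {a b : V}, Relation.ReflTransGen r a b →
    X a → ¬ X b → ∃ x y, X x ∧ ¬ X y ∧ r x y := by
  intro a b h
  induction h with
  | refl => intro ha hb; exact absurd ha hb
  | @tail c d h₁ h₂ ih =>
    intro ha hb
    by_cases hc : X c
    · exact ⟨c, d, hc, hb, h₂⟩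
    · exact ih ha hc

/-- Rotate a cycle by one. -/
lemma moon_rot_one {a c : V} {t : List V} (h : List.Chain r a (c :: t ++ [a])) :
    List.Chain r c ((t ++ [a]) ++ [c]) := by
  rcases h with _ | _ | ⟨hac, h⟩
  have : List.Chain r c (t ++ a :: [c]) := by
    show List.IsChain r (c :: (t ++ a :: [c])); rw [List.isChain_cons_split]
    exact ⟨h, List.Chain.cons hac List.Chain.nil⟩
  simpa using this

/-- Rotate a cycle so that position k is the head. -/
lemma moon_rot_get : ∀ (k : ℕ) (a : V) (l : List V), List.Chain r a (l ++ [a]) →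
    ∀ (hk : k < (a :: l).length),
    ∃ m : List V, List.Chain r ((a :: l).get ⟨k, hk⟩) (m ++ [(a :: l).get ⟨k, hk⟩]) ∧
      ((a :: l).get ⟨k, hk⟩ :: m).Perm (a :: l) := by
  intro k
  induction k with
  | zero => intro a l h hk; exact ⟨l, h, List.Perm.refl _⟩
  | succ k ih =>
    intro a l h hk
    match l with
    | [] => simp at hk
    | c :: t =>
      have hrot : List.Chain r c ((t ++ [a]) ++ [c]) := moon_rot_one h
      have hk' : k < (c :: (t ++ [a])).length := by
        simp at hk ⊢; omega
      obtain ⟨m, hm1, hm2⟩ := ih c (t ++ [a]) hrot hk'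
      have hget : (c :: (t ++ [a])).get ⟨k, hk'⟩ = (a :: c :: t).get ⟨k + 1, hk⟩ := by
        have h1 : (c :: (t ++ [a])) = (c :: t) ++ [a] := by simp
        have hklen : k < (c :: t).length := by simp at hk ⊢; omega
        simp only [List.get_eq_getElem]
        have := List.getElem_append_left (as := c :: t) (bs := [a]) (h := hklen)
          (h' := by simpa using hk')
        simpa using this
      rw [hget] at hm1 hm2
      refine ⟨m, hm1, hm2.trans ?_⟩
      have := List.perm_append_comm (l₁ := c :: t) (l₂ := [a])
      simpa using this

lemma moon_rot_mem {a b : V} {l : List V} (h : List.Chain r a (l ++ [a]))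
    (hb : b ∈ a :: l) :
    ∃ m : List V, List.Chain r b (m ++ [b]) ∧ (b :: m).Perm (a :: l) := by
  rw [List.mem_iff_get] at hb
  obtain ⟨⟨k, hk⟩, rfl⟩ := hb
  exact moon_rot_get k a l h hk

/-- Insertion, starting from a vertex beating u. -/
lemma moon_insertA {u z : V} (huz : r u z) : ∀ (m : List V) (x : V),
    List.Chain r x (m ++ [z]) → r x u → (∀ y ∈ m, r y u ∨ r u y) →
    ∃ l', List.Chain r x (l' ++ [z]) ∧ (x :: l').Perm (u :: x :: m) := by
  intro m
  induction m with
  | nil =>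
    intro x hch hxu _
    refine ⟨[u], ?_, List.Perm.swap _ _ _⟩
    simp only [List.cons_append, List.nil_append]
    exact List.Chain.cons hxu (List.Chain.cons huz List.Chain.nil)
  | cons b t ih =>
    intro x hch hxu hcomp
    rcases hch with _ | _ | ⟨hxb, hch⟩
    rcases hcomp b (List.mem_cons_self (a := b) (l := t)) with hbu | hub
    · obtain ⟨l'', h1, h2⟩ := ih b hch hbu (fun y hy => hcomp y (List.mem_cons_of_mem _ hy))
      refine ⟨b :: l'', List.Chain.cons hxb h1,
        (h2.cons x).trans (List.Perm.swap u x _)⟩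
    · refine ⟨u :: b :: t, ?_, List.Perm.swap _ _ _⟩
      exact List.Chain.cons hxu (List.Chain.cons hub hch)

/-- Insertion into a cycle headed by a vertex u beats. -/
lemma moon_insertB {u a : V} (hua : r u a)
    (hirr : ∀ v, ¬ r v v) :
    ∀ (l : List V) (x : V),
    List.Chain r x (l ++ [a]) → (∃ y ∈ l, r y u) → (∀ y ∈ l, Xor' (r y u) (r u y)) →
    ∃ l', List.Chain r x (l' ++ [a]) ∧ (x :: l').Perm (u :: x :: l) := by
  intro l
  induction l with
  | nil => rintro x _ ⟨y, hy, _⟩ _; simp at hy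
  | cons b t ih =>
    intro x hch ⟨y, hy, hyu⟩ hcomp
    rcases hch with _ | _ | ⟨hxb, hch⟩
    rcases hcomp b (List.mem_cons_self (a := b) (l := t)) with ⟨hbu, _⟩ | ⟨hub, hnbu⟩
    · obtain ⟨l'', h1, h2⟩ := moon_insertA hua t b hch hbu
        (fun y hy => ((hcomp y (List.mem_cons_of_mem _ hy)).elim (fun h => Or.inl h.1)
          (fun h => Or.inr h.1)))
      refine ⟨b :: l'', List.Chain.cons hxb h1,
        (h2.cons x).trans (List.Perm.swap u x _)⟩
    · have hyt : y ∈ t := by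
        rcases List.mem_cons.mp hy with rfl | h
        · exact absurd hyu hnbu
        · exact h
      obtain ⟨l'', h1, h2⟩ := ih b hch ⟨y, hyt, hyu⟩
        (fun y hy => hcomp y (List.mem_cons_of_mem _ hy))
      refine ⟨b :: l'', List.Chain.cons hxb h1,
        (h2.cons x).trans (List.Perm.swap u x _)⟩

end MoonAux

/-- Key lemma: cycles as lists of every length from 3 to card V, through any vertex. -/
lemma moon_key {V : Type*} [Fintype V] {r : V → V → Prop}
    (hirr : ∀ v, ¬ r v v)
    (htour : ∀ u v : V, u ≠ v → Xor' (r u v) (r v u))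
    (hstrong : ∀ u v : V, Relation.ReflTransGen r u v) :
    ∀ ℓ : ℕ, 3 ≤ ℓ → ℓ ≤ Fintype.card V → ∀ v : V,
    ∃ l : List V, (v :: l).length = ℓ ∧ (v :: l).Nodup ∧ List.Chain r v (l ++ [v]) := by
  classical
  intro ℓ hℓ3
  induction ℓ, hℓ3 using Nat.le_induction with
  | base =>
    -- triangle through every vertex
    intro hcard v
    -- some vertex ≠ v
    have h1 : (1 : ℕ) < Fintype.card V := by omega
    obtain ⟨w0, hw0⟩ := Fintype.exists_ne_of_one_lt_card h1 v
    -- I nonempty: ∃ w, r w v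
    have hI : ∃ w, r w v := by
      by_contra hc
      push_neg at hc
      obtain ⟨x, y, hx, hy, hxy⟩ := moon_cut (X := fun x => x ≠ v) (hstrong w0 v) hw0
        (by simp)
      push_neg at hy
      subst hy
      exact hc x hxy
    obtain ⟨w, hwv⟩ := hI
    -- cut on X = {v} ∪ out-neighbors of v
    have hXw : ¬ (w = v ∨ r v w) := by
      rintro (rfl | h)
      · exact hirr _ hwv
      · rcases htour v w (fun h => hirr v (h ▸ hwv)) with ⟨_, hn⟩ | ⟨_, hn⟩
        · exact hn hwv
        · exact hn h
    obtain ⟨x, y, hx, hy, hxy⟩ := moon_cut (X := fun x => x = v ∨ r v x) (hstrong v w)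
      (Or.inl rfl) hXw
    push_neg at hy
    obtain ⟨hyv, hnvy⟩ := hy
    have hyv' : r y v := by
      rcases htour y v hyv with ⟨h, _⟩ | ⟨h, _⟩
      · exact h
      · exact absurd h hnvy
    have hvx : r v x := by
      rcases hx with rfl | h
      · exact absurd hxy hnvy
      · exact h
    have hxv : x ≠ v := fun h => hirr v (h ▸ hvx)
    have hxy' : x ≠ y := fun h => hirr x (h ▸ hxy)
    refine ⟨[x, y], by simp, ?_, ?_⟩
    · simp [List.nodup_cons]
      exact ⟨⟨Ne.symm hxv, Ne.symm hyv⟩, hxy'⟩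
    · exact List.Chain.cons hvx (List.Chain.cons hxy (List.Chain.cons hyv' List.Chain.nil))
  | succ ℓ hℓ3 ih =>
    intro hcard v
    obtain ⟨l, hlen, hnd, hch⟩ := ih (by omega) v
    obtain ⟨w1, w2, rest, rfl⟩ : ∃ w1 w2 rest, l = w1 :: w2 :: rest := by
      rcases l with _ | ⟨w1, _ | ⟨w2, rest⟩⟩
      · simp at hlen; omega
      · simp at hlen; omega
      · exact ⟨_, _, _, rfl⟩
    set C := v :: w1 :: w2 :: rest with hC
    have hlen' : rest.length + 3 = ℓ := by
      have h := hlen; rw [hC] at h; simp at h; omega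
    -- there is a vertex outside C
    have hout : ∃ u, u ∉ C := by
      by_contra hc
      push_neg at hc
      have h1 : C.toFinset = Finset.univ := Finset.eq_univ_of_forall (fun x => by
        simpa using hc x)
      have h2 : C.toFinset.card = C.length := List.toFinset_card_of_nodup hnd
      rw [h1, Finset.card_univ] at h2
      rw [hC] at h2
      simp at h2
      omega
    have hmemC : ∀ x ∈ C, x ∉ C → False := fun x h h' => h' h
    by_cases h1 : ∃ u, u ∉ C ∧ (∃ x ∈ C, r x u) ∧ (∃ y ∈ C, r u y)
    · -- Case 1: insert u into the cycle
      obtain ⟨u, huC, ⟨x0, hx0C, hx0u⟩, ⟨y0, hy0C, huy0⟩⟩ := h1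
      obtain ⟨m, hmch, hmperm⟩ := moon_rot_mem hch hy0C
      have hperm_mem : ∀ z, z ∈ y0 :: m ↔ z ∈ C := fun z => hmperm.mem_iff
      have huM : u ∉ y0 :: m := fun h => huC ((hperm_mem u).mp h)
      have hx0M : x0 ∈ y0 :: m := (hperm_mem x0).mpr hx0C
      have hx0y0 : x0 ≠ y0 := by
        rintro rfl
        rcases htour x0 u (fun h => huC (h ▸ hx0C)) with ⟨_, hn⟩ | ⟨_, hn⟩
        · exact hn huy0
        · exact hn hx0u
      have hx0m : x0 ∈ m := by
        rcases List.mem_cons.mp hx0M with h | h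
        · exact absurd h hx0y0
        · exact h
      obtain ⟨l', hl'ch, hl'perm⟩ := moon_insertB huy0 hirr m y0 hmch ⟨x0, hx0m, hx0u⟩
        (fun z hz => htour z u (fun h => huM (h ▸ List.mem_cons_of_mem _ hz)))
      -- new cycle y0 :: l', contains v; rotate to v
      have hvnew : v ∈ y0 :: l' := by
        rw [hl'perm.mem_iff]
        refine List.mem_cons_of_mem _ ((hperm_mem v).mpr ?_)
        rw [hC]; exact List.mem_cons_self
      obtain ⟨m2, hm2ch, hm2perm⟩ := moon_rot_mem hl'ch hvnew
      refine ⟨m2, ?_, ?_, hm2ch⟩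
      · have := hm2perm.length_eq
        have := hl'perm.length_eq
        have := hmperm.length_eq
        simp only [List.length_cons] at *
        omega
      · refine hm2perm.nodup_iff.mpr (hl'perm.nodup_iff.mpr ?_)
        exact List.Nodup.cons huM (hmperm.nodup_iff.mpr hnd)
    · -- Case 2: every outside vertex dominates C or is dominated by C
      push_neg at h1
      have hclass : ∀ u, u ∉ C → (∀ x ∈ C, r u x) ∨ (∀ x ∈ C, r x u) := by
        intro u hu
        by_cases hex : ∃ x ∈ C, r x u
        · right
          intro x hx
          have hno := h1 u hu hex
          rcases htour x u (fun he => hu (he ▸ hx)) with ⟨h', _⟩ | ⟨h', _⟩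
          · exact h'
          · exact absurd h' (hno x hx)
        · left
          push_neg at hex
          intro x hx
          rcases htour u x (fun he => hu (he ▸ hx)) with ⟨h', _⟩ | ⟨h', _⟩
          · exact h'
          · exact absurd h' (hex x hx)
      obtain ⟨u0, hu0⟩ := hout
      have hvC : v ∈ C := by rw [hC]; exact List.mem_cons_self
      -- find t ∈ T, s ∈ S with r t s
      have hts : ∃ t s, (t ∉ C ∧ ∀ x ∈ C, r x t) ∧ (s ∉ C ∧ ∀ x ∈ C, r s x) ∧ r t s := by
        rcases hclass u0 hu0 with hS | hT
        · -- u0 ∈ S; cut X = C ∪ T on path v → u0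
          have hnX : ¬ (u0 ∈ C ∨ (u0 ∉ C ∧ ∀ x ∈ C, r x u0)) := by
            rintro (h | ⟨_, hT⟩)
            · exact hu0 h
            · have ha := hT v hvC
              have hb := hS v hvC
              rcases htour v u0 (fun he => hu0 (he ▸ hvC)) with ⟨_, hn⟩ | ⟨_, hn⟩
              · exact hn hb
              · exact hn ha
          obtain ⟨x, y, hx, hy, hxy⟩ := moon_cut
            (X := fun z => z ∈ C ∨ (z ∉ C ∧ ∀ x ∈ C, r x z)) (hstrong v u0)
            (Or.inl hvC) hnX
          push_neg at hy
          obtain ⟨hyC, hyT⟩ := hy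
          have hyS : ∀ x ∈ C, r y x := by
            rcases hclass y hyC with h | h
            · exact h
            · obtain ⟨z, hz, hnz⟩ := hyT hyC
              exact absurd (h z hz) hnz
          rcases hx with hxC | hxT
          · exfalso
            have := hyS x hxC
            rcases htour x y (fun he => hyC (he ▸ hxC)) with ⟨_, hn⟩ | ⟨_, hn⟩
            · exact hn this
            · exact hn hxy
          · exact ⟨x, y, hxT, ⟨hyC, hyS⟩, hxy⟩
        · -- u0 ∈ T; cut X = T on path u0 → v
          obtain ⟨x, y, hx, hy, hxy⟩ := moon_cut
            (X := fun z => z ∉ C ∧ ∀ x ∈ C, r x z) (hstrong u0 v)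
            ⟨hu0, hT⟩ (fun h => h.1 hvC)
          obtain ⟨hxC, hxT⟩ := hx
          have hyC : y ∉ C := by
            intro hyC
            have := hxT y hyC
            rcases htour x y (fun he => hxC (he ▸ hyC)) with ⟨_, hn⟩ | ⟨_, hn⟩
            · exact hn this
            · exact hn hxy
          have hyS : ∀ z ∈ C, r y z := by
            rcases hclass y hyC with h | h
            · exact h
            · exact absurd ⟨hyC, h⟩ hy
          exact ⟨x, y, ⟨hxC, hxT⟩, ⟨hyC, hyS⟩, hxy⟩
      obtain ⟨t, s, ⟨htC, htT⟩, ⟨hsC, hsS⟩, hrts⟩ := hts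
      rcases hch with _ | _ | ⟨hvw1, hch⟩
      rcases hch with _ | _ | ⟨hw1w2, hch⟩
      -- new cycle: v :: t :: s :: w2 :: rest
      refine ⟨t :: s :: w2 :: rest, ?_, ?_, ?_⟩
      · simp only [List.length_cons]; omega
      · have hw2C : w2 ∈ C := by simp [hC]
        have hrestC : ∀ z ∈ rest, z ∈ C := by intro z hz; simp [hC, hz]
        have hts' : t ≠ s := fun h => hirr t (h ▸ hrts)
        have hnd' := hnd
        rw [hC] at hnd'
        simp only [List.nodup_cons, List.mem_cons, not_or] at hnd' ⊢
        obtain ⟨⟨hv1, hv2, hvr⟩, ⟨h12, h1r⟩, h2r, hndr⟩ := hnd' 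
        have htC' : t ≠ v ∧ t ≠ w1 ∧ t ≠ w2 ∧ t ∉ rest := by
          constructor
          · intro h; exact htC (h ▸ hvC)
          constructor
          · intro h; apply htC; simp [hC, h]
          constructor
          · intro h; apply htC; simp [hC, h]
          · intro h; exact htC (hrestC t h)
        have hsC' : s ≠ v ∧ s ≠ w1 ∧ s ≠ w2 ∧ s ∉ rest := by
          constructor
          · intro h; exact hsC (h ▸ hvC)
          constructor
          · intro h; apply hsC; simp [hC, h]
          constructor
          · intro h; apply hsC; simp [hC, h]
          · intro h; exact hsC (hrestC s h)
        refine ⟨⟨Ne.symm htC'.1, Ne.symm hsC'.1, hv2, hvr⟩,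
          ⟨hts', htC'.2.2.1, htC'.2.2.2⟩, ⟨hsC'.2.2.1, hsC'.2.2.2⟩,
          h2r, hndr⟩
      · refine List.Chain.cons (htT v hvC) (List.Chain.cons hrts
          (List.Chain.cons (hsS w2 (by simp [hC])) hch))

/-- Moon's theorem: every vertex of a strongly connected tournament on
$n ≥ 3$ vertices lies on directed cycles of every length from $3$ to $n$. -/
theorem moon_vertex_pancyclic
    {V : Type*} [Fintype V] (r : V → V → Prop)
    (hirr : ∀ v, ¬ r v v)
    (htour : ∀ u v : V, u ≠ v → Xor' (r u v) (r v u))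
    (hstrong : ∀ u v : V, Relation.ReflTransGen r u v)
    (n : ℕ) (hcard : Fintype.card V = n) (hn : 3 ≤ n) :
    ∀ v : V, ∀ ℓ : ℕ, 3 ≤ ℓ → ℓ ≤ n →
      ∃ c : ZMod ℓ → V, Function.Injective c ∧
        (∀ i, r (c i) (c (i + 1))) ∧ ∃ i, c i = v := by
  intro v ℓ hl3 hln
  obtain ⟨l, hlen, hnd, hch⟩ := moon_key hirr htour hstrong ℓ hl3 (by omega) v
  haveI : NeZero ℓ := ⟨by omega⟩
  haveI : Fact (1 < ℓ) := ⟨by omega⟩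
  set L := v :: l with hL
  have hlenL : L.length = ℓ := hlen
  have hch' : List.IsChain r (L ++ [v]) := hch
  rw [List.isChain_iff_getElem] at hch'
  have hedge : ∀ (k j : ℕ) (hk : k < L.length) (hj : j < L.length),
      j = (k + 1) % ℓ → r (L[k]'hk) (L[j]'hj) := by
    intro k j hk hj hjeq
    have hkℓ : k < ℓ := hlenL ▸ hk
    have hlen2 : (L ++ [v]).length = ℓ + 1 := by simp [hlenL]
    have h := hch' k (by omega)
    have e1 : (L ++ [v])[k]'(by omega) = L[k]'hk := List.getElem_append_left hk
    rw [e1] at h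
    by_cases hk1 : k + 1 < ℓ
    · have e2 : (L ++ [v])[k+1]'(by omega) = L[k+1]'(by omega) :=
        List.getElem_append_left (by omega)
      rw [e2] at h
      have hj' : j = k + 1 := by rw [hjeq, Nat.mod_eq_of_lt hk1]
      subst hj'
      exact h
    · have hkeq : k + 1 = ℓ := by omega
      have hj0 : j = 0 := by rw [hjeq, hkeq, Nat.mod_self]
      subst hj0
      have e2 : (L ++ [v])[k+1]'(by omega) = v := by
        rw [List.getElem_append_right (by omega)]
        simp [hlenL, hkeq]
      rw [e2] at h
      have e0 : L[0]'hj = v := by simp [hL]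
      rw [e0]
      exact h
  refine ⟨fun i => L[i.val]'(by rw [hlenL]; exact ZMod.val_lt i), ?_, ?_, ?_⟩
  · intro i j h
    exact ZMod.val_injective ℓ ((hnd.getElem_inj_iff).mp h)
  · intro i
    have hval : (i + 1).val = (i.val + 1) % ℓ := by rw [ZMod.val_add, ZMod.val_one]
    exact hedge i.val (i+1).val (by rw [hlenL]; exact ZMod.val_lt i)
      (by rw [hlenL]; exact ZMod.val_lt _) hval
  · refine ⟨0, ?_⟩
    simp [hL, ZMod.val_zero]
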